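/- For any matrix A ∈ ℝ^{n×n}, the spectral abscissa of A is at most the spectral abscissa of its Metzler majorant: α(A) ≤ α(⌈A⌉_Mzr). -/

import Mathlib

open Filter
open scoped ENNReal NNReal

attribute [local instance] Matrix.linftyOpNormedRing Matrix.linftyOpNormedAlgebra

namespace SpecAbsAux

variable {n : ℕ}

/-- Entrywise bound on powers. -/
lemma entry_pow_le (B : Matrix (Fin n) (Fin n) ℂ) (C : Matrix (Fin n) (Fin n) ℝ)
    (h : ∀ i j, ‖B i j‖ ≤ C i j) (k : ℕ) : ∀ i j, ‖(B ^ k) i j‖ ≤ (C ^ k) i j := by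
  induction k with
  | zero =>
    intro i j
    simp only [pow_zero, Matrix.one_apply]
    split <;> simp
  | succ k ih =>
    intro i j
    rw [pow_succ, pow_succ, Matrix.mul_apply, Matrix.mul_apply]
    calc ‖∑ l, (B ^ k) i l * B l j‖ ≤ ∑ l, ‖(B ^ k) i l‖ * ‖B l j‖ := by
          refine (norm_sum_le _ _).trans ?_
          refine Finset.sum_le_sum fun l _ => ?_
          rw [norm_mul]
      _ ≤ ∑ l, (C ^ k) i l * C l j := by
          refine Finset.sum_le_sum fun l _ => ?_
          exact mul_le_mul (ih i l) (h l j) (norm_nonneg _)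
            ((norm_nonneg _).trans (ih i l))

lemma entry_le_nnnorm (B : Matrix (Fin n) (Fin n) ℂ) (i j : Fin n) : ‖B i j‖ ≤ ‖B‖ := by
  have : ‖B i j‖₊ ≤ ‖B‖₊ := by
    rw [Matrix.linfty_opNNNorm_def]
    have h1 : ‖B i j‖₊ ≤ ∑ l, ‖B i l‖₊ :=
      Finset.single_le_sum (f := fun l => ‖B i l‖₊) (fun l _ => zero_le) (Finset.mem_univ j)
    exact h1.trans (Finset.le_sup (f := fun i => ∑ j, ‖B i j‖₊) (Finset.mem_univ i))
  exact_mod_cast this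

lemma nnnorm_le_of_entry (B : Matrix (Fin n) (Fin n) ℂ) (C : Matrix (Fin n) (Fin n) ℝ)
    (h : ∀ i j, ‖B i j‖ ≤ C i j) : ‖B‖₊ ≤ ‖C.map (algebraMap ℝ ℂ)‖₊ := by
  rw [Matrix.linfty_opNNNorm_def, Matrix.linfty_opNNNorm_def]
  refine Finset.sup_mono_fun fun i _ => Finset.sum_le_sum fun j _ => ?_
  have h0 : (0:ℝ) ≤ C i j := (norm_nonneg _).trans (h i j)
  have : ‖(C.map (algebraMap ℝ ℂ)) i j‖ = C i j := by
    simp [Matrix.map_apply, Complex.norm_real, abs_of_nonneg h0]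
  rw [← NNReal.coe_le_coe, coe_nnnorm, coe_nnnorm, this]
  exact h i j

lemma spec_le (hn : 0 < n) (B : Matrix (Fin n) (Fin n) ℂ) (C : Matrix (Fin n) (Fin n) ℝ)
    (h : ∀ i j, ‖B i j‖ ≤ C i j) {z : ℂ} (hz : z ∈ spectrum ℂ B) :
    ∃ w ∈ spectrum ℂ (C.map (algebraMap ℝ ℂ)), ‖z‖ ≤ ‖w‖ := by
  haveI : NeZero n := ⟨hn.ne'⟩
  haveI : CompleteSpace (Matrix (Fin n) (Fin n) ℂ) := FiniteDimensional.complete ℂ _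
  set Cc := C.map (algebraMap ℝ ℂ) with hCc
  obtain ⟨w, hw, hwr⟩ := spectrum.exists_nnnorm_eq_spectralRadius Cc
  refine ⟨w, hw, ?_⟩
  have key : (‖z‖₊ : ℝ≥0∞) ≤ spectralRadius ℂ Cc := by
    refine ge_of_tendsto (spectrum.pow_nnnorm_pow_one_div_tendsto_nhds_spectralRadius Cc) ?_
    filter_upwards [eventually_gt_atTop 0] with k hk
    have h1 : z ^ k ∈ spectrum ℂ (B ^ k) := spectrum.pow_image_subset B k ⟨z, hz, rfl⟩
    have h2 : ‖z ^ k‖ ≤ ‖B ^ k‖ := spectrum.norm_le_norm_of_mem h1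
    have h4 : (C ^ k).map (algebraMap ℝ ℂ) = Cc ^ k := by
      rw [hCc, ← RingHom.mapMatrix_apply, ← RingHom.mapMatrix_apply, map_pow]
    have h3 : ‖B ^ k‖₊ ≤ ‖Cc ^ k‖₊ := h4 ▸ nnnorm_le_of_entry _ _ (entry_pow_le B C h k)
    have h5 : ‖z‖₊ ^ k ≤ ‖Cc ^ k‖₊ := by
      refine le_trans ?_ h3
      rw [← nnnorm_pow]
      exact_mod_cast h2
    have hk' : (k : ℝ) ≠ 0 := Nat.cast_ne_zero.mpr hk.ne'
    calc (‖z‖₊ : ℝ≥0∞) = ((‖z‖₊ : ℝ≥0∞) ^ (k : ℝ)) ^ (1 / k : ℝ) := by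
          rw [← ENNReal.rpow_mul, mul_one_div, div_self hk', ENNReal.rpow_one]
      _ ≤ (‖Cc ^ k‖₊ : ℝ≥0∞) ^ (1 / k : ℝ) := by
          apply ENNReal.rpow_le_rpow _ (by positivity)
          rw [ENNReal.rpow_natCast]
          exact_mod_cast h5
  rw [← hwr] at key
  exact_mod_cast key

end SpecAbsAux

/-- Spectral abscissa: supremum of real parts of (complex) eigenvalues. -/
noncomputable def specAbs {n : ℕ} (A : Matrix (Fin n) (Fin n) ℝ) : ℝ :=
  sSup {r : ℝ | ∃ μ : ℂ, μ ∈ spectrum ℂ (A.map (algebraMap ℝ ℂ)) ∧ r = μ.re}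

/-- Metzler majorant: keeps the diagonal, takes absolute values off the diagonal. -/
def mzr {n : ℕ} (A : Matrix (Fin n) (Fin n) ℝ) : Matrix (Fin n) (Fin n) ℝ :=
  fun i j => if i = j then A i j else |A i j|

theorem specAbs_le_specAbs_mzr {n : ℕ} (A : Matrix (Fin n) (Fin n) ℝ) :
    specAbs A ≤ specAbs (mzr A) := by
  rcases Nat.eq_zero_or_pos n with h0 | hn
  · subst h0
    have he : ∀ (B : Matrix (Fin 0) (Fin 0) ℝ),
        {r : ℝ | ∃ μ : ℂ, μ ∈ spectrum ℂ (B.map (algebraMap ℝ ℂ)) ∧ r = μ.re} = ∅ := by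
      intro B
      ext r
      simp only [Set.mem_setOf_eq, Set.mem_empty_iff_false, iff_false, not_exists]
      rintro μ ⟨hμ, -⟩
      exact hμ (isUnit_of_subsingleton _)
    simp only [specAbs, he, Real.sSup_empty, le_refl]
  · haveI : NeZero n := ⟨hn.ne'⟩
    haveI : CompleteSpace (Matrix (Fin n) (Fin n) ℂ) := FiniteDimensional.complete ℂ _
    set B := A.map (algebraMap ℝ ℂ) with hB
    set Mc := (mzr A).map (algebraMap ℝ ℂ) with hMc
    obtain ⟨K, hK⟩ : ∃ K : ℝ, K = ‖Mc‖ := ⟨_, rfl⟩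
    have hK0 : (0:ℝ) ≤ K := hK ▸ norm_nonneg _
    set S := {r : ℝ | ∃ μ : ℂ, μ ∈ spectrum ℂ Mc ∧ r = μ.re} with hS
    have hbdd : BddAbove S := by
      refine ⟨K, ?_⟩
      rintro r ⟨ν, hν, rfl⟩
      refine (Complex.re_le_norm ν).trans ?_
      rw [hK]
      exact spectrum.norm_le_norm_of_mem hν
    obtain ⟨μ₀, hμ₀⟩ := spectrum.nonempty B
    show sSup _ ≤ sSup S
    refine csSup_le ⟨μ₀.re, μ₀, hμ₀, rfl⟩ ?_
    rintro r ⟨μ, hμ, rfl⟩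
    refine le_of_forall_pos_le_add fun ε hε => ?_
    have hdiag : ∀ i, |A i i| ≤ K := by
      intro i
      have h1 := SpecAbsAux.entry_le_nnnorm Mc i i
      rw [← hK] at h1
      refine le_trans (le_of_eq ?_) h1
      rw [hMc]
      simp [Matrix.map_apply, mzr, Complex.norm_real]
    obtain ⟨c, hc⟩ : ∃ c : ℝ, c = K + 1 + K^2/(2*ε) := ⟨_, rfl⟩
    have hcK : K + 1 ≤ c := by
      have h0 : 0 ≤ K^2/(2*ε) := by positivity
      linarith [hc.ge]
    set P := mzr A + c • (1 : Matrix (Fin n) (Fin n) ℝ) with hP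
    have hPmap : P.map (algebraMap ℝ ℂ) =
        algebraMap ℂ (Matrix (Fin n) (Fin n) ℂ) (c:ℂ) + Mc := by
      ext i j
      rw [Matrix.map_apply, Matrix.add_apply, Matrix.algebraMap_matrix_apply, hMc,
        Matrix.map_apply, hP, Matrix.add_apply, Matrix.smul_apply, Matrix.one_apply]
      by_cases hij : i = j <;> simp [hij, Complex.coe_algebraMap] <;> ring
    have hBc : ∀ i j, ‖(algebraMap ℂ (Matrix (Fin n) (Fin n) ℂ) (c:ℂ) + B) i j‖ ≤ P i j := by
      intro i j
      by_cases hij : i = j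
      · subst hij
        have h1 : -K ≤ A i i := by have := (abs_le.mp (hdiag i)).1; linarith
        have e1 : (algebraMap ℂ (Matrix (Fin n) (Fin n) ℂ) (c:ℂ) + B) i i
            = ((c + A i i : ℝ) : ℂ) := by
          simp [Matrix.add_apply, Matrix.algebraMap_matrix_apply, hB, Matrix.map_apply,
            Complex.coe_algebraMap]
        have e2 : P i i = A i i + c := by
          simp [hP, Matrix.add_apply, Matrix.smul_apply, Matrix.one_apply, mzr]
        rw [e1, e2, Complex.norm_real, Real.norm_eq_abs, abs_of_nonneg (by linarith)]
        linarith
      · have e1 : (algebraMap ℂ (Matrix (Fin n) (Fin n) ℂ) (c:ℂ) + B) i j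
            = ((A i j : ℝ) : ℂ) := by
          simp [Matrix.add_apply, Matrix.algebraMap_matrix_apply, hij, hB, Matrix.map_apply,
            Complex.coe_algebraMap]
        have e2 : P i j = |A i j| := by
          simp [hP, Matrix.add_apply, Matrix.smul_apply, Matrix.one_apply, hij, mzr]
        rw [e1, e2, Complex.norm_real, Real.norm_eq_abs]
    have hμc : μ + (c:ℂ) ∈ spectrum ℂ (algebraMap ℂ (Matrix (Fin n) (Fin n) ℂ) (c:ℂ) + B) :=
      spectrum.add_mem_add_iff.mpr hμ
    obtain ⟨w, hw, hzw⟩ := SpecAbsAux.spec_le hn _ P hBc hμc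
    rw [hPmap] at hw
    have hwc : w - (c:ℂ) ∈ spectrum ℂ Mc := by
      have h1 : (w - (c:ℂ)) + (c:ℂ) ∈ spectrum ℂ
          (algebraMap ℂ (Matrix (Fin n) (Fin n) ℂ) (c:ℂ) + Mc) := by
        rwa [sub_add_cancel]
      exact spectrum.add_mem_add_iff.mp h1
    have hνK : ‖w - (c:ℂ)‖ ≤ K := hK ▸ spectrum.norm_le_norm_of_mem hwc
    obtain ⟨rr, hrr⟩ : ∃ rr : ℝ, rr = (w - (c:ℂ)).re := ⟨_, rfl⟩
    have hrS : rr ≤ sSup S := le_csSup hbdd ⟨w - (c:ℂ), hwc, hrr⟩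
    have him : |w.im| ≤ K := by
      have h2 : |(w - (c:ℂ)).im| ≤ K :=
        (Complex.abs_im_le_norm _).trans hνK
      simpa using h2
    have hrK : -K ≤ rr := by
      have h2 := (Complex.abs_re_le_norm (w - (c:ℂ))).trans
        hνK
      rw [← hrr] at h2
      have := (abs_le.mp h2).1
      linarith
    have hwre : w.re = rr + c := by rw [hrr]; simp
    have hre : μ.re + c ≤ ‖w‖ := by
      have h1 : (μ + (c:ℂ)).re = μ.re + c := by simp
      calc μ.re + c = (μ + (c:ℂ)).re := h1.symm
        _ ≤ ‖μ + (c:ℂ)‖ := by exact Complex.re_le_norm _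
        _ ≤ ‖w‖ := hzw
    have hwsq : ‖w‖^2 = (rr + c)^2 + w.im^2 := by
      rw [Complex.sq_norm, Complex.normSq_apply, hwre]
      ring
    have hKe : K^2 ≤ 2*ε*(rr + c) := by
      have h2 : 2*ε*(c - K) = 2*ε + K^2 := by
        rw [hc]
        field_simp
        ring
      nlinarith [hε, hrK]
    have hX : ‖w‖ ≤ rr + c + ε := by
      have hXpos : 0 ≤ rr + c + ε := by linarith
      have him2 : w.im^2 ≤ K^2 := by
        have := pow_le_pow_left₀ (abs_nonneg w.im) him 2
        rwa [sq_abs] at this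
      have hsq : ‖w‖^2 ≤ (rr + c + ε)^2 := by nlinarith [him2, hKe, hε, hK0, hwsq]
      nlinarith [norm_nonneg w]
    linarith
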